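/- arXiv:2401.04941 — 2 statements merged into one kernel-verified Lean document; each statement's English description precedes it below -/
import Mathlib

section
/- Let q be a prime power and let k ≥ b ≥ 1 be integers. Then there is no F_q-linear code of length q^k and dimension k + 1 whose minimum b-symbol distance is greater than or equal to q^k - q^{k-b} + 1. In particular, a code of length q^k, dimension k + 1 and minimum b-symbol distance q^k - q^{k-b} is distance-optimal. -/
/-- The `b`-symbol weight of a vector `c ∈ F^n` (coordinates indexed cyclically by `ZMod n`). -/
noncomputable def bWt {n : ℕ} {F : Type*} [Zero F] (b : ℕ) (c : ZMod n → F) : ℕ :=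
  Nat.card {i : ZMod n | ∃ j < b, c (i + (j : ZMod n)) ≠ 0}

lemma arith16 (q k b : ℕ) (hq : 2 ≤ q) (hb : 1 ≤ b) (hkb : b ≤ k)
    (h : (q^(k+1)-1)*(q^k - q^(k-b)+1) ≤ q^k * (q^(k+1) - q^(k+1-b))) : False := by
  have e1 : q^(k-b) ≤ q^k := Nat.pow_le_pow_right (by omega) (by omega)
  have e2 : q^(k+1-b) ≤ q^(k+1) := Nat.pow_le_pow_right (by omega) (by omega)
  have e3 : 1 ≤ q^(k+1) := Nat.one_le_pow _ _ (by omega)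
  have ek : q^(k+1) = q * q^k := by rw [pow_succ]; ring
  have eb : q^k = q^(k-b) * q^b := by rw [← pow_add]; congr 1; omega
  have eb2 : q^(k+1-b) = q * q^(k-b) := by rw [← pow_succ']; congr 1; omega
  have hqb : 2 ≤ q^b := le_trans hq (Nat.le_self_pow (by omega) q)
  have hx : 1 ≤ q^(k-b) := Nat.one_le_pow _ _ (by omega)
  have hN : 2 * q^(k-b) ≤ q^k := by
    calc 2 * q^(k-b) = q^(k-b) * 2 := by ring
    _ ≤ q^(k-b) * q^b := Nat.mul_le_mul_left _ hqb
    _ = q^k := eb.symm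
  have ekZ : ((q:ℤ))^(k+1) = q * q^k := by ring
  have eb2Z : ((q:ℤ))^(k+1-b) = q * q^(k-b) := by rw [← pow_succ']; congr 1; omega
  have hxZ : (1:ℤ) ≤ (q:ℤ)^(k-b) := by exact_mod_cast hx
  have hNZ : 2 * (q:ℤ)^(k-b) ≤ (q:ℤ)^k := by exact_mod_cast hN
  have hqZ : (2:ℤ) ≤ q := by exact_mod_cast hq
  zify [e1, e2, e3] at h
  rw [ekZ, eb2Z] at h
  nlinarith [h, hxZ, hNZ, hqZ, sq_nonneg ((q:ℤ)^k)]

/-- There is no `F_q`-linear code of length `q^k` and dimension `k+1` all of whose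
nonzero codewords have `b`-symbol weight `≥ q^k - q^{k-b} + 1` (i.e. with minimum
`b`-symbol distance `≥ q^k - q^{k-b} + 1`). -/
theorem stmt16 (q k b : ℕ) (hb : 1 ≤ b) (hkb : b ≤ k)
    (F : Type*) [Field F] [Fintype F] (hF : Fintype.card F = q) :
    ¬ ∃ C : Submodule F (ZMod (q ^ k) → F),
        Module.finrank F C = k + 1 ∧
        ∀ c ∈ C, c ≠ 0 → q ^ k - q ^ (k - b) + 1 ≤ bWt b c := by
  classical
  rintro ⟨C, hrank, hmin⟩
  have hq : 2 ≤ q := hF ▸ Fintype.one_lt_card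
  haveI : NeZero (q ^ k) := ⟨by positivity⟩
  haveI : Fintype C := Fintype.ofFinite C
  have hcardC : Fintype.card C = q ^ (k + 1) := by
    rw [Module.card_eq_pow_finrank (K := F) (V := C), hF, hrank]
  -- bWt as a filter card
  have hbwt : ∀ c : ZMod (q^k) → F, bWt b c =
      (Finset.univ.filter (fun i : ZMod (q^k) => ∃ j < b, c (i + (j : ZMod (q^k))) ≠ 0)).card := by
    intro c
    rw [bWt, ← Fintype.card_subtype]
    exact Nat.card_eq_fintype_card
  -- double counting
  set P : ZMod (q^k) → C → Prop := fun i c => ∃ j < b, (c : ZMod (q^k) → F) (i + (j : ZMod (q^k))) ≠ 0 with hP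
  have hswap : ∑ c : C, bWt b (c : ZMod (q^k) → F)
      = ∑ i : ZMod (q^k), (Finset.univ.filter (P i)).card := by
    simp only [hbwt, Finset.card_filter]
    rw [Finset.sum_comm]
  -- per-column upper bound
  have hcol : ∀ i : ZMod (q^k), (Finset.univ.filter (P i)).card ≤ q^(k+1) - q^(k+1-b) := by
    intro i
    set φ : C →ₗ[F] (Fin b → F) :=
      LinearMap.pi (fun j : Fin b => (LinearMap.proj (i + ((j : ℕ) : ZMod (q^k)))).comp C.subtype) with hφ
    have hker : (Finset.univ.filter (fun c : C => ¬ P i c)).card = Fintype.card (LinearMap.ker φ) := by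
      rw [← Fintype.card_subtype]
      refine Fintype.card_congr (Equiv.subtypeEquivRight fun c => ?_)
      simp only [hP, LinearMap.mem_ker, funext_iff, hφ, LinearMap.pi_apply, LinearMap.comp_apply,
        LinearMap.proj_apply, Submodule.coe_subtype, Pi.zero_apply]
      push_neg
      constructor
      · intro h j; exact h j j.2
      · intro h j hj; exact h ⟨j, hj⟩
    have hkerrank : k + 1 - b ≤ Module.finrank F (LinearMap.ker φ) := by
      have h1 := LinearMap.finrank_range_add_finrank_ker φ
      have h2 : Module.finrank F (LinearMap.range φ) ≤ b := by
        refine (Submodule.finrank_le _).trans_eq ?_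
        simp [Module.finrank_pi]
      rw [hrank] at h1
      omega
    have hkcard : q^(k+1-b) ≤ Fintype.card (LinearMap.ker φ) := by
      rw [Module.card_eq_pow_finrank (K := F) (V := LinearMap.ker φ), hF]
      exact Nat.pow_le_pow_right (by omega) hkerrank
    have hsplit := Finset.card_filter_add_card_filter_not (s := (Finset.univ : Finset C))
      (p := P i)
    rw [Finset.card_univ, hcardC] at hsplit
    omega
  -- lower bound on the sum
  have hlow : (q^(k+1) - 1) * (q^k - q^(k-b) + 1) ≤ ∑ c : C, bWt b (c : ZMod (q^k) → F) := by
    have hsub : Finset.univ.erase (0 : C) ⊆ Finset.univ := Finset.erase_subset _ _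
    calc (q^(k+1) - 1) * (q^k - q^(k-b) + 1)
        = (Finset.univ.erase (0 : C)).card • (q^k - q^(k-b) + 1) := by
          rw [Finset.card_erase_of_mem (Finset.mem_univ _), Finset.card_univ, hcardC, smul_eq_mul]
      _ ≤ ∑ c ∈ Finset.univ.erase (0 : C), bWt b (c : ZMod (q^k) → F) := by
          refine Finset.card_nsmul_le_sum _ _ _ ?_
          intro c hc
          have hc0 : (c : ZMod (q^k) → F) ≠ 0 := by
            simpa [Submodule.coe_eq_zero] using Finset.ne_of_mem_erase hc
          exact hmin _ c.2 hc0
      _ ≤ ∑ c : C, bWt b (c : ZMod (q^k) → F) :=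
          Finset.sum_le_sum_of_subset hsub
  -- upper bound on the sum
  have hup : ∑ c : C, bWt b (c : ZMod (q^k) → F) ≤ q^k * (q^(k+1) - q^(k+1-b)) := by
    rw [hswap]
    calc ∑ i : ZMod (q^k), (Finset.univ.filter (P i)).card
        ≤ (Finset.univ : Finset (ZMod (q^k))).card • (q^(k+1) - q^(k+1-b)) :=
          Finset.sum_le_card_nsmul _ _ _ (fun i _ => hcol i)
      _ = q^k * (q^(k+1) - q^(k+1-b)) := by
          rw [Finset.card_univ, ZMod.card, smul_eq_mul]
  exact arith16 q k b hq hb hkb (le_trans hlow hup)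
end

section
/- Let q ≥ 2 and k ≥ b ≥ 1 be integers. Then Σ_{i=0}^{k} ⌈q^{b-1}·(q^k - q^{k-b} + 1)/q^i⌉ = (q^b - 1)·q^k/(q - 1) + q^{b-1} + k - b. -/
private lemma ceilAux (q n i : ℕ) (v : ℤ) (hq : 0 < q)
    (h1 : (v - 1) * (q : ℤ) ^ i < (n : ℤ)) (h2 : (n : ℤ) ≤ v * (q : ℤ) ^ i) :
    ⌈((n : ℚ)) / (q : ℚ) ^ i⌉ = v := by
  have hpos : (0 : ℚ) < (q : ℚ) ^ i := by positivity
  rw [Int.ceil_eq_iff]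
  constructor
  · rw [lt_div_iff₀ hpos]
    have h1' : (((v - 1) * (q : ℤ) ^ i : ℤ) : ℚ) < ((n : ℤ) : ℚ) := by exact_mod_cast h1
    push_cast at h1' ⊢
    linarith
  · rw [div_le_iff₀ hpos]
    have h2' : (((n : ℤ)) : ℚ) ≤ ((v * (q : ℤ) ^ i : ℤ) : ℚ) := by exact_mod_cast h2
    push_cast at h2' ⊢
    linarith

/-- `Σ_{i=0}^{k} ⌈q^{b-1}·(q^k - q^{k-b} + 1)/q^i⌉ = (q^b - 1)·q^k/(q - 1) + q^{b-1} + k - b`,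
where the division on the right-hand side is exact. -/
theorem stmt17 (q k b : ℕ) (hq : 2 ≤ q) (hb : 1 ≤ b) (hkb : b ≤ k) :
    (∑ i ∈ Finset.range (k + 1),
        ⌈((q ^ (b - 1) * (q ^ k - q ^ (k - b) + 1) : ℕ) : ℚ) / (q : ℚ) ^ i⌉)
      = (((q ^ b - 1) * q ^ k / (q - 1) + q ^ (b - 1) + (k - b) : ℕ) : ℤ) := by
  obtain ⟨b', rfl⟩ := Nat.exists_eq_add_of_le hb
  obtain ⟨c, rfl⟩ := Nat.exists_eq_add_of_le hkb
  have hb1 : 1 + b' - 1 = b' := by omega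
  have hkb1 : 1 + b' + c - (1 + b') = c := by omega
  rw [hb1, hkb1]
  set n : ℕ := q ^ b' * (q ^ (1 + b' + c) - q ^ c + 1) with hn
  have hq0 : 0 < q := by omega
  have hqz1 : (1 : ℤ) ≤ (q : ℤ) := by exact_mod_cast hq0
  have hle : q ^ c ≤ q ^ (1 + b' + c) := Nat.pow_le_pow_right hq0 (by omega)
  set MZ : ℤ := (q : ℤ) ^ (1 + b' + c) - (q : ℤ) ^ c + 1 with hMZ
  have hnz : (n : ℤ) = (q : ℤ) ^ b' * MZ := by
    rw [hn, hMZ]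
    push_cast [Nat.cast_sub hle]
    ring
  -- split the sum
  have hsplit : (1 + b' + c) + 1 = ((b' + 1) + c) + 1 := by omega
  rw [hsplit, Finset.sum_range_succ, Finset.sum_range_add]
  -- first block: i ≤ b'
  have hS1 : ∀ i ∈ Finset.range (b' + 1),
      ⌈((n : ℕ) : ℚ) / (q : ℚ) ^ i⌉ = (q : ℤ) ^ (b' - i) * MZ := by
    intro i hi
    rw [Finset.mem_range] at hi
    obtain ⟨d, hd⟩ : ∃ d, b' = i + d := ⟨b' - i, by omega⟩
    have hdi : b' - i = d := by omega
    have heq : (n : ℤ) = (q : ℤ) ^ (b' - i) * MZ * (q : ℤ) ^ i := by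
      rw [hnz, hdi, hd]; ring
    apply ceilAux q n i _ hq0
    · rw [heq]
      have : (0 : ℤ) < (q : ℤ) ^ i := by positivity
      nlinarith
    · rw [heq]
  -- middle block: i = b' + 1 + j, j < c
  have hS2 : ∀ j ∈ Finset.range c,
      ⌈((n : ℕ) : ℚ) / (q : ℚ) ^ (b' + 1 + j)⌉
        = (q : ℤ) ^ (b' + 1 + (c - 1 - j)) - (q : ℤ) ^ (c - 1 - j) + 1 := by
    intro j hj
    rw [Finset.mem_range] at hj
    obtain ⟨e, he⟩ : ∃ e, c = j + 1 + e := ⟨c - 1 - j, by omega⟩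
    have hce : c - 1 - j = e := by omega
    rw [hce]
    have hnz' : (n : ℤ) = (q : ℤ) ^ (2 * b' + j + e + 2) - (q : ℤ) ^ (b' + j + e + 1)
        + (q : ℤ) ^ b' := by
      rw [hnz, hMZ, he]; ring
    apply ceilAux q n _ _ hq0
    · have heq : ((q : ℤ) ^ (b' + 1 + e) - (q : ℤ) ^ e + 1 - 1) * (q : ℤ) ^ (b' + 1 + j)
          = (n : ℤ) - (q : ℤ) ^ b' := by
        rw [hnz']; ring
      have : (0 : ℤ) < (q : ℤ) ^ b' := by positivity
      linarith [heq.le, heq.ge, this]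
    · have heq : ((q : ℤ) ^ (b' + 1 + e) - (q : ℤ) ^ e + 1) * (q : ℤ) ^ (b' + 1 + j)
          = (n : ℤ) - (q : ℤ) ^ b' + (q : ℤ) ^ (b' + 1 + j) := by
        rw [hnz']; ring
      have hple : (q : ℤ) ^ b' ≤ (q : ℤ) ^ (b' + 1 + j) := pow_le_pow_right₀ hqz1 (by omega)
      linarith [heq.ge]
  -- last term: i = 1 + b' + c
  have hS3 : ⌈((n : ℕ) : ℚ) / (q : ℚ) ^ (b' + 1 + c)⌉ = (q : ℤ) ^ b' := by
    apply ceilAux q n _ _ hq0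
    · have heq : ((q : ℤ) ^ b' - 1) * (q : ℤ) ^ (b' + 1 + c)
          = (q : ℤ) ^ (2 * b' + c + 1) - (q : ℤ) ^ (b' + c + 1) := by ring
      have hnz' : (n : ℤ) = (q : ℤ) ^ (2 * b' + c + 1) - (q : ℤ) ^ (b' + c)
          + (q : ℤ) ^ b' := by rw [hnz, hMZ]; ring
      have h1 : (q : ℤ) ^ (b' + c) < (q : ℤ) ^ (b' + c + 1) :=
        pow_lt_pow_right₀ (by exact_mod_cast hq) (by omega)
      have h2 : (0 : ℤ) < (q : ℤ) ^ b' := by positivity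
      rw [heq, hnz']
      linarith
    · have heq : (q : ℤ) ^ b' * (q : ℤ) ^ (b' + 1 + c) = (q : ℤ) ^ (2 * b' + c + 1) := by ring
      have hnz' : (n : ℤ) = (q : ℤ) ^ (2 * b' + c + 1) - (q : ℤ) ^ (b' + c)
          + (q : ℤ) ^ b' := by rw [hnz, hMZ]; ring
      have h1 : (q : ℤ) ^ b' ≤ (q : ℤ) ^ (b' + c) := pow_le_pow_right₀ hqz1 (by omega)
      rw [heq, hnz']
      linarith
  rw [Finset.sum_congr rfl hS1, Finset.sum_congr rfl (fun j hj => hS2 j hj), hS3]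
  -- evaluate the sums via reflection
  have hrefl1 : ∑ i ∈ Finset.range (b' + 1), (q : ℤ) ^ (b' - i) * MZ
      = (∑ i ∈ Finset.range (b' + 1), (q : ℤ) ^ i) * MZ := by
    rw [← Finset.sum_mul]
    congr 1
    exact Finset.sum_range_reflect (fun i => (q : ℤ) ^ i) (b' + 1)
  have hrefl2 : ∑ j ∈ Finset.range c,
        ((q : ℤ) ^ (b' + 1 + (c - 1 - j)) - (q : ℤ) ^ (c - 1 - j) + 1)
      = (q : ℤ) ^ (b' + 1) * (∑ j ∈ Finset.range c, (q : ℤ) ^ j)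
        - (∑ j ∈ Finset.range c, (q : ℤ) ^ j) + c := by
    rw [Finset.sum_range_reflect (fun j => (q : ℤ) ^ (b' + 1 + j) - (q : ℤ) ^ j + 1) c]
    rw [Finset.sum_add_distrib, Finset.sum_sub_distrib]
    simp [pow_add, ← Finset.mul_sum, mul_comm]
  rw [hrefl1, hrefl2]
  -- the RHS division
  have hdvd : (q - 1) ∣ (q ^ (1 + b') - 1) * q ^ (1 + b' + c) :=
    Dvd.dvd.mul_right (by simpa using Nat.sub_dvd_pow_sub_pow q 1 (1 + b')) _
  set D : ℕ := (q ^ (1 + b') - 1) * q ^ (1 + b' + c) / (q - 1) with hDdef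
  have hD : D * (q - 1) = (q ^ (1 + b') - 1) * q ^ (1 + b' + c) := Nat.div_mul_cancel hdvd
  have h1q : (1:ℕ) ≤ q ^ (1 + b') := Nat.one_le_pow _ _ hq0
  have hDz : (D : ℤ) * ((q : ℤ) - 1)
      = ((q : ℤ) ^ (1 + b') - 1) * (q : ℤ) ^ (1 + b' + c) := by
    have h := congrArg (Nat.cast : ℕ → ℤ) hD
    rw [Nat.cast_mul, Nat.cast_mul, Nat.cast_sub (by omega : 1 ≤ q),
      Nat.cast_sub h1q, Nat.cast_pow, Nat.cast_pow, Nat.cast_one] at h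
    exact h
  have hG1 : (∑ i ∈ Finset.range (b' + 1), (q : ℤ) ^ i) * ((q : ℤ) - 1)
      = (q : ℤ) ^ (b' + 1) - 1 := geom_sum_mul _ _
  have hGc : (∑ j ∈ Finset.range c, (q : ℤ) ^ j) * ((q : ℤ) - 1)
      = (q : ℤ) ^ c - 1 := geom_sum_mul _ _
  have hqne : ((q : ℤ) - 1) ≠ 0 := by
    have : (2 : ℤ) ≤ (q : ℤ) := by exact_mod_cast hq
    omega
  rw [Nat.cast_add, Nat.cast_add, Nat.cast_pow]
  apply mul_right_cancel₀ hqne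
  rw [hMZ]
  linear_combination ((q : ℤ) ^ (1 + b' + c) - (q : ℤ) ^ c + 1) * hG1
    + ((q : ℤ) ^ (b' + 1) - 1) * hGc - hDz
end
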